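/- The tetrahedron index satisfies, for all integers $m$ and $e$, the recursion $q^{e/2} I_\Delta(m+1,e) + q^{-m/2} I_\Delta(m,e+1) - I_\Delta(m,e) = 0$. -/

import Mathlib

/- We work with the formal variable `t = q^(1/2)`, so that `q = t^2` and
elements of `ℤ((q^(1/2)))` are described by their coefficient functions `ℤ → ℤ`
(coefficient of `t^k`).  The `q`-Pochhammer symbol `(q)_n = ∏_{i=1}^n (1-q^i)`
is a power series in `t` with constant term `1`, hence invertible. -/

/-- `(q)_n = ∏_{i=1}^n (1 - q^i)` as a power series in `t` with `q = t^2`. -/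
noncomputable def qPoch (n : ℕ) : PowerSeries ℤ :=
  ∏ i ∈ Finset.range n, (1 - (PowerSeries.X : PowerSeries ℤ) ^ (2 * (i + 1)))

/-- The inverse `1/(q)_n` (the constant term of `(q)_n` is `1`). -/
noncomputable def qPochInv (n : ℕ) : PowerSeries ℤ :=
  PowerSeries.invOfUnit (qPoch n) 1

/-- Coefficient of `t^k` in a power series in `t` (zero for negative `k`). -/
noncomputable def coeffZ (k : ℤ) (f : PowerSeries ℤ) : ℤ :=
  if 0 ≤ k then PowerSeries.coeff k.toNat f else 0

lemma qPoch_constantCoeff (n : ℕ) : PowerSeries.constantCoeff (qPoch n) = 1 := by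
  simp [qPoch, map_prod]

lemma qPoch_mul_inv (n : ℕ) : qPoch n * qPochInv n = 1 := by
  apply PowerSeries.mul_invOfUnit
  simp [qPoch_constantCoeff]

lemma qPochInv_succ (n : ℕ) :
    qPochInv n = (1 - (PowerSeries.X : PowerSeries ℤ) ^ (2 * (n + 1))) * qPochInv (n + 1) := by
  have h1 : qPoch (n + 1) = qPoch n * (1 - (PowerSeries.X : PowerSeries ℤ) ^ (2 * (n + 1))) := by
    rw [qPoch, Finset.prod_range_succ]; rfl
  calc qPochInv n = qPochInv n * (qPoch (n + 1) * qPochInv (n + 1)) := by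
        rw [qPoch_mul_inv, mul_one]
    _ = (qPoch n * qPochInv n) * ((1 - (PowerSeries.X : PowerSeries ℤ) ^ (2 * (n + 1))) * qPochInv (n + 1)) := by
        rw [h1]; ring
    _ = (1 - (PowerSeries.X : PowerSeries ℤ) ^ (2 * (n + 1))) * qPochInv (n + 1) := by
        rw [qPoch_mul_inv, one_mul]

lemma coeffZ_neg {k : ℤ} (h : k < 0) (f : PowerSeries ℤ) : coeffZ k f = 0 := by
  simp [coeffZ, not_le.mpr h]

lemma coeffZ_sub (k : ℤ) (f g : PowerSeries ℤ) :
    coeffZ k (f - g) = coeffZ k f - coeffZ k g := by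
  unfold coeffZ; split <;> simp

lemma coeffZ_X_pow_mul (k : ℤ) (d : ℕ) (g : PowerSeries ℤ) :
    coeffZ k ((PowerSeries.X : PowerSeries ℤ) ^ d * g) = coeffZ (k - d) g := by
  unfold coeffZ
  by_cases hk : 0 ≤ k
  · by_cases hd : (d : ℤ) ≤ k
    · have h1 : k.toNat = (k - d).toNat + d := by omega
      rw [if_pos hk, if_pos (by omega : (0:ℤ) ≤ k - d), h1, PowerSeries.coeff_X_pow_mul]
    · rw [if_pos hk, if_neg (by omega : ¬ (0:ℤ) ≤ k - d),
        PowerSeries.coeff_X_pow_mul' g d k.toNat, if_neg (by omega)]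
  · rw [if_neg hk, if_neg (by omega)]

/-- The telescoping term `T(n) = (-1)^n q^{E(n)-n} / ((q)_{n-1} (q)_{n+e})`. -/
noncomputable def Tc (m e k : ℤ) (n : ℕ) : ℤ :=
  if 1 ≤ n ∧ 0 ≤ (n : ℤ) + e then
    (-1) ^ n *
      coeffZ (k - ((n : ℤ) * ((n : ℤ) - 1) - (2 * n + e) * m))
        (qPochInv (n - 1) * qPochInv ((n : ℤ) + e).toNat)
  else 0

lemma exists_growth (a b c : ℤ) : ∃ N : ℕ, ∀ n : ℕ, N ≤ n → c < (n : ℤ) * (n + 1) + a * n + b := by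
  refine ⟨a.natAbs + b.natAbs + c.natAbs + 1, fun n hn => ?_⟩
  have h : (a.natAbs : ℤ) + b.natAbs + c.natAbs + 1 ≤ (n : ℤ) := by exact_mod_cast hn
  have ha : -(a.natAbs : ℤ) ≤ a := by omega
  have hb : -(b.natAbs : ℤ) ≤ b := by omega
  have hc : c ≤ (c.natAbs : ℤ) := by omega
  have h1 : (1 : ℤ) ≤ (n : ℤ) := by omega
  have h2 : (b.natAbs : ℤ) + c.natAbs + 2 ≤ (n : ℤ) + 1 - a.natAbs := by omega
  have h3 : (1 : ℤ) * ((b.natAbs : ℤ) + c.natAbs + 2) ≤ (n : ℤ) * ((n : ℤ) + 1 - a.natAbs) :=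
    mul_le_mul h1 h2 (by omega) (by omega)
  have h4 : -(a.natAbs : ℤ) * n ≤ a * n := mul_le_mul_of_nonneg_right ha (by omega)
  nlinarith [h3, h4, hb, hc]

/-- Coefficient of `t^k` in the summand
`S(m,e,n) = (-1)^n q^{n(n+1)/2 - (n+e/2)m} / ((q)_n (q)_{n+e})`
of the tetrahedron index, with the convention `1/(q)_n = 0` for `n < 0`.
(In `t`-units the exponent is `n(n+1) - (2n+e)m`.) -/
noncomputable def Scoeff (m e : ℤ) (n : ℕ) (k : ℤ) : ℤ :=
  if 0 ≤ (n : ℤ) + e then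
    (-1) ^ n *
      coeffZ (k - ((n : ℤ) * (n + 1) - (2 * n + e) * m))
        (qPochInv n * qPochInv ((n : ℤ) + e).toNat)
  else 0

lemma Scoeff_eq_zero {m e k : ℤ} {n : ℕ} (h : k < (n : ℤ) * (n + 1) - (2 * n + e) * m) :
    Scoeff m e n k = 0 := by
  unfold Scoeff
  split
  · rw [coeffZ_neg (by omega), mul_zero]
  · rfl

lemma Tc_eq_zero {m e k : ℤ} {n : ℕ} (h : k < (n : ℤ) * ((n : ℤ) - 1) - (2 * n + e) * m) :
    Tc m e k n = 0 := by
  unfold Tc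
  split
  · rw [coeffZ_neg (by omega), mul_zero]
  · rfl

lemma keyB (m e k : ℤ) (n : ℕ) :
    Scoeff m (e + 1) n (k + m) = - Tc m e k (n + 1) := by
  unfold Scoeff Tc
  by_cases h : 0 ≤ (n : ℤ) + (e + 1)
  · rw [if_pos h, if_pos ⟨Nat.le_add_left 1 n, by push_cast; omega⟩]
    have e1 : ((n : ℤ) + (e + 1)).toNat = (((n + 1 : ℕ) : ℤ) + e).toNat := by
      push_cast; ring_nf
    have e2 : (k + m) - ((n : ℤ) * (n + 1) - (2 * n + (e + 1)) * m)
        = k - (((n + 1 : ℕ) : ℤ) * (((n + 1 : ℕ) : ℤ) - 1) - (2 * ((n + 1 : ℕ) : ℤ) + e) * m) := by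
      push_cast; ring
    rw [e1, e2, Nat.add_sub_cancel, pow_succ]
    ring
  · rw [if_neg h, if_neg (by push_cast at h ⊢; omega)]
    ring

lemma keyAC (m e k : ℤ) (n : ℕ) :
    Scoeff (m + 1) e n (k - e) - Scoeff m e n k = Tc m e k n := by
  unfold Scoeff Tc
  by_cases he : 0 ≤ (n : ℤ) + e
  · rw [if_pos he, if_pos he]
    cases n with
    | zero =>
      rw [if_neg (by omega)]
      push_cast
      have e2 : k - e - ((0 : ℤ) - (0 + e) * (m + 1)) = k - (0 - (0 + e) * m) := by ring
      rw [e2]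
      ring
    | succ p =>
      rw [if_pos ⟨Nat.le_add_left 1 p, he⟩, Nat.add_sub_cancel, qPochInv_succ p,
        sub_mul, one_mul, sub_mul, mul_assoc, coeffZ_sub, coeffZ_X_pow_mul]
      have e1 : k - (((p + 1 : ℕ) : ℤ) * (((p + 1 : ℕ) : ℤ) - 1) - (2 * ((p + 1 : ℕ) : ℤ) + e) * m)
          = (k - e) - (((p + 1 : ℕ) : ℤ) * (((p + 1 : ℕ) : ℤ) + 1) - (2 * ((p + 1 : ℕ) : ℤ) + e) * (m + 1)) := by
        push_cast; ring
      have e2 : (k - e) - (((p + 1 : ℕ) : ℤ) * (((p + 1 : ℕ) : ℤ) + 1) - (2 * ((p + 1 : ℕ) : ℤ) + e) * (m + 1))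
            - ((2 * (p + 1) : ℕ) : ℤ)
          = k - (((p + 1 : ℕ) : ℤ) * (((p + 1 : ℕ) : ℤ) + 1) - (2 * ((p + 1 : ℕ) : ℤ) + e) * m) := by
        push_cast; ring
      rw [e1, e2]
      ring
  · rw [if_neg he, if_neg he, if_neg (by tauto)]
    ring

lemma key (m e k : ℤ) (n : ℕ) :
    Scoeff (m + 1) e n (k - e) + Scoeff m (e + 1) n (k + m) - Scoeff m e n k
      = Tc m e k n - Tc m e k (n + 1) := by
  rw [keyB m e k n, ← keyAC m e k n]
  ring

lemma Scoeff_vanish (m e k : ℤ) : ∃ N : ℕ, ∀ n : ℕ, N ≤ n → Scoeff m e n k = 0 := by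
  obtain ⟨N, hN⟩ := exists_growth (-(2 * m)) (-(e * m)) k
  refine ⟨N, fun n hn => Scoeff_eq_zero ?_⟩
  have h := hN n hn
  have hr : (n : ℤ) * (n + 1) + (-(2 * m)) * n + (-(e * m))
      = (n : ℤ) * (n + 1) - (2 * n + e) * m := by ring
  linarith [h, hr.ge, hr.le]

lemma Tc_vanish (m e k : ℤ) : ∃ N : ℕ, ∀ n : ℕ, N ≤ n → Tc m e k n = 0 := by
  obtain ⟨N, hN⟩ := exists_growth (-2 - 2 * m) (-(e * m)) k
  refine ⟨N, fun n hn => Tc_eq_zero ?_⟩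
  have h := hN n hn
  have hr : (n : ℤ) * (n + 1) + (-2 - 2 * m) * n + (-(e * m))
      = (n : ℤ) * ((n : ℤ) - 1) - (2 * n + e) * m := by ring
  linarith [h, hr.ge, hr.le]

/-- Coefficient of `t^k` in the tetrahedron index `I_Δ(m,e)`; for fixed `k`
only finitely many `n` contribute, so the `finsum` is the honest sum. -/
noncomputable def Icoeff (m e : ℤ) (k : ℤ) : ℤ :=
  ∑ᶠ n : ℕ, Scoeff m e n k

lemma Icoeff_eq_sum (m e k : ℤ) {N : ℕ} (h : ∀ n : ℕ, N ≤ n → Scoeff m e n k = 0) :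
    Icoeff m e k = ∑ n ∈ Finset.range N, Scoeff m e n k := by
  refine finsum_eq_sum_of_support_subset _ ?_
  intro n hn
  simp only [Finset.coe_range, Set.mem_Iio]
  by_contra hlt
  exact hn (h n (by omega))

/-- The tetrahedron index satisfies
`q^{e/2} I_Δ(m+1,e) + q^{-m/2} I_Δ(m,e+1) - I_Δ(m,e) = 0`,
stated coefficientwise in `t = q^{1/2}` (multiplication by `q^{e/2} = t^e`
shifts the coefficient index by `e`). -/
theorem tetrahedron_index_rec_one (m e k : ℤ) :
    Icoeff (m + 1) e (k - e) + Icoeff m (e + 1) (k + m) - Icoeff m e k = 0 := by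
  obtain ⟨N1, h1⟩ := Scoeff_vanish (m + 1) e (k - e)
  obtain ⟨N2, h2⟩ := Scoeff_vanish m (e + 1) (k + m)
  obtain ⟨N3, h3⟩ := Scoeff_vanish m e k
  obtain ⟨N4, h4⟩ := Tc_vanish m e k
  set N := max (max N1 N2) (max N3 N4) with hN
  have b1 : N1 ≤ N := by omega
  have b2 : N2 ≤ N := by omega
  have b3 : N3 ≤ N := by omega
  rw [Icoeff_eq_sum (m + 1) e (k - e) (fun n hn => h1 n (b1.trans hn)),
      Icoeff_eq_sum m (e + 1) (k + m) (fun n hn => h2 n (b2.trans hn)),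
      Icoeff_eq_sum m e k (fun n hn => h3 n (b3.trans hn)),
      ← Finset.sum_add_distrib, ← Finset.sum_sub_distrib,
      Finset.sum_congr rfl (fun n _ => key m e k n),
      Finset.sum_range_sub' (Tc m e k) N]
  have t0 : Tc m e k 0 = 0 := by unfold Tc; rw [if_neg (by omega)]
  rw [t0, h4 N (by omega), sub_zero]
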